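/- arXiv:2410.13188 — 2 statements merged into one kernel-verified Lean document; each statement's English description precedes it below -/
import Mathlib

section
/- Let G(t) be a smooth family of inner products on a finite-dimensional real Lie algebra 𝔤. Then for any fixed A ∈ End 𝔤: ⟨(d/dt)Rc_{G(t)}, A⟩ = (1/4)⟨δ(G⁻¹ dG/dt), δ(A*)⟩, where Rc_G = G⁻¹Ric_G, A* is the G(t)-adjoint of A, δ(B)(x,y) = B[x,y] − [Bx,y] − [x,By], and inner products on End 𝔤 and on Λ²𝔤*⊗𝔤 are induced by G(t). -/
open Matrix

namespace RFN

variable {n : ℕ}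

/-- Bracket determined by structure constants: `[e i, e j] = ∑ k, c i j k • e k`. -/
def bra (c : Fin n → Fin n → Fin n → ℝ) (x y : Fin n → ℝ) : Fin n → ℝ :=
  fun k => ∑ i, ∑ j, x i * y j * c i j k

/-- `c` is a family of structure constants of a Lie algebra. -/
def IsLieSC (c : Fin n → Fin n → Fin n → ℝ) : Prop :=
  (∀ i j k, c i j k = - c j i k) ∧
  ∀ x y z, bra c (bra c x y) z + bra c (bra c y z) x + bra c (bra c z x) y = 0

def adIter (c : Fin n → Fin n → Fin n → ℝ) (v : ℕ → Fin n → ℝ) :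
    ℕ → (Fin n → ℝ) → (Fin n → ℝ)
  | 0, x => x
  | m + 1, x => bra c (v m) (adIter c v m x)

/-- Nilpotency of the Lie algebra with structure constants `c`. -/
def IsNilpotentSC (c : Fin n → Fin n → Fin n → ℝ) : Prop :=
  ∃ N : ℕ, ∀ v x, adIter c v N x = 0

/-- Inner product of vectors with respect to the metric matrix `G`. -/
def gdot (G : Matrix (Fin n) (Fin n) ℝ) (x y : Fin n → ℝ) : ℝ :=
  ∑ i, ∑ j, x i * G i j * y j

/-- Components of the Ricci bilinear form of the invariant metric `G`:
`Ric_G(x,y) = -(1/2) Σ G([x,e_i],[y,e_j])G^{ij} + (1/4) Σ G^{ip}G^{jq}G([e_i,e_j],x)G([e_p,e_q],y)`. -/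
noncomputable def Ricm (c : Fin n → Fin n → Fin n → ℝ) (G : Matrix (Fin n) (Fin n) ℝ) :
    Matrix (Fin n) (Fin n) ℝ :=
  Matrix.of fun a b =>
    -(1/2) * (∑ i, ∑ j, G⁻¹ i j * gdot G (c a i) (c b j))
    + (1/4) * (∑ i, ∑ j, ∑ p, ∑ q, G⁻¹ i p * G⁻¹ j q *
        (∑ k, c i j k * G k a) * (∑ l, c p q l * G l b))

/-- Scalar curvature `R_G = -(1/4)|[·,·]|²_G`. -/
noncomputable def scalR (c : Fin n → Fin n → Fin n → ℝ) (G : Matrix (Fin n) (Fin n) ℝ) : ℝ :=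
  -(1/4) * (∑ i, ∑ j, ∑ p, ∑ q, G⁻¹ i p * G⁻¹ j q * gdot G (c i j) (c p q))

/-- Ricci endomorphism `Rc_G = G⁻¹ Ric_G`. -/
noncomputable def Rc (c : Fin n → Fin n → Fin n → ℝ) (G : Matrix (Fin n) (Fin n) ℝ) :
    Matrix (Fin n) (Fin n) ℝ := G⁻¹ * Ricm c G

/-- `δ(A)(e_i,e_j) = A[e_i,e_j] - [A e_i, e_j] - [e_i, A e_j]` (components). -/
def deltaE (c : Fin n → Fin n → Fin n → ℝ) (A : Matrix (Fin n) (Fin n) ℝ) :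
    Fin n → Fin n → Fin n → ℝ :=
  fun i j k => (∑ l, A k l * c i j l) - (∑ l, A l i * c l j k) - (∑ l, A l j * c i l k)

/-- The inner product on `Λ²𝔤*⊗𝔤` induced by `G` (full sum over ordered pairs). -/
noncomputable def tinner (G : Matrix (Fin n) (Fin n) ℝ) (μ ν : Fin n → Fin n → Fin n → ℝ) : ℝ :=
  ∑ i, ∑ j, ∑ p, ∑ q, G⁻¹ i p * G⁻¹ j q * gdot G (μ i j) (ν p q)

/-- The (Hilbert–Schmidt) inner product of endomorphisms induced by `G`. -/
noncomputable def einner (G : Matrix (Fin n) (Fin n) ℝ) (A B : Matrix (Fin n) (Fin n) ℝ) : ℝ :=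
  ∑ i, ∑ j, G⁻¹ i j * gdot G (fun k => A k i) (fun k => B k j)

/-- The inner product of bilinear forms induced by `G`. -/
noncomputable def binner (G : Matrix (Fin n) (Fin n) ℝ) (S T : Matrix (Fin n) (Fin n) ℝ) : ℝ :=
  ∑ i, ∑ j, ∑ p, ∑ q, G⁻¹ i p * G⁻¹ j q * S i j * T p q

/-- `|Ric_G|²`. -/
noncomputable def ric2 (c : Fin n → Fin n → Fin n → ℝ) (G : Matrix (Fin n) (Fin n) ℝ) : ℝ :=
  binner G (Ricm c G) (Ricm c G)

/-- The functional `W₊(G,τ) = τ R_G + τ² |Ric_G|²`. -/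
noncomputable def Wplus (c : Fin n → Fin n → Fin n → ℝ) (G : Matrix (Fin n) (Fin n) ℝ) (τ : ℝ) : ℝ :=
  τ * scalR c G + τ ^ 2 * ric2 c G

/-- Structure constants of the 3-dimensional Heisenberg Lie algebra: `[e₀,e₁] = e₂`, `e₂` central. -/
def heis : Fin 3 → Fin 3 → Fin 3 → ℝ := fun i j k =>
  if i = 0 ∧ j = 1 ∧ k = 2 then 1 else if i = 1 ∧ j = 0 ∧ k = 2 then -1 else 0

end RFN

namespace RFN
variable {n : ℕ}

/-! ### Generic summation helpers -/

lemma flat2 {M : Type*} [AddCommMonoid M] (F : Fin n → Fin n → M) :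
    ∑ x : Fin n × Fin n, F x.1 x.2 = ∑ a, ∑ b, F a b := by
  simp only [Fintype.sum_prod_type]
lemma flat3 {M : Type*} [AddCommMonoid M] (F : Fin n → Fin n → Fin n → M) :
    ∑ x : Fin n × Fin n × Fin n, F x.1 x.2.1 x.2.2 = ∑ a, ∑ b, ∑ c, F a b c := by
  simp only [Fintype.sum_prod_type]
lemma flat4 {M : Type*} [AddCommMonoid M] (F : Fin n → Fin n → Fin n → Fin n → M) :
    ∑ x : Fin n × Fin n × Fin n × Fin n, F x.1 x.2.1 x.2.2.1 x.2.2.2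
      = ∑ a, ∑ b, ∑ c, ∑ d, F a b c d := by
  simp only [Fintype.sum_prod_type]
lemma flat5 {M : Type*} [AddCommMonoid M] (F : Fin n → Fin n → Fin n → Fin n → Fin n → M) :
    ∑ x : Fin n × Fin n × Fin n × Fin n × Fin n,
      F x.1 x.2.1 x.2.2.1 x.2.2.2.1 x.2.2.2.2
      = ∑ a, ∑ b, ∑ c, ∑ d, ∑ e, F a b c d e := by
  simp only [Fintype.sum_prod_type]
lemma flat6 {M : Type*} [AddCommMonoid M]
    (F : Fin n → Fin n → Fin n → Fin n → Fin n → Fin n → M) :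
    ∑ x : Fin n × Fin n × Fin n × Fin n × Fin n × Fin n,
      F x.1 x.2.1 x.2.2.1 x.2.2.2.1 x.2.2.2.2.1 x.2.2.2.2.2
      = ∑ a, ∑ b, ∑ c, ∑ d, ∑ e, ∑ f, F a b c d e f := by
  simp only [Fintype.sum_prod_type]
lemma flat7 {M : Type*} [AddCommMonoid M]
    (F : Fin n → Fin n → Fin n → Fin n → Fin n → Fin n → Fin n → M) :
    ∑ x : Fin n × Fin n × Fin n × Fin n × Fin n × Fin n × Fin n,
      F x.1 x.2.1 x.2.2.1 x.2.2.2.1 x.2.2.2.2.1 x.2.2.2.2.2.1 x.2.2.2.2.2.2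
      = ∑ a, ∑ b, ∑ c, ∑ d, ∑ e, ∑ f, ∑ g, F a b c d e f g := by
  simp only [Fintype.sum_prod_type]
lemma flat9 {M : Type*} [AddCommMonoid M]
    (F : Fin n → Fin n → Fin n → Fin n → Fin n → Fin n → Fin n → Fin n → Fin n → M) :
    ∑ x : Fin n × Fin n × Fin n × Fin n × Fin n × Fin n × Fin n × Fin n × Fin n,
      F x.1 x.2.1 x.2.2.1 x.2.2.2.1 x.2.2.2.2.1 x.2.2.2.2.2.1 x.2.2.2.2.2.2.1
        x.2.2.2.2.2.2.2.1 x.2.2.2.2.2.2.2.2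
      = ∑ a, ∑ b, ∑ c, ∑ d, ∑ e, ∑ f, ∑ g, ∑ h, ∑ i, F a b c d e f g h i := by
  simp only [Fintype.sum_prod_type]

lemma f0a (S : ℝ) (X Y : Matrix (Fin n) (Fin n) ℝ) (k m : Fin n) :
    ∑ p, S * (X k p * Y p m) = S * (X * Y) k m := by
  rw [← Finset.mul_sum, Matrix.mul_apply]
lemma f0b (S : ℝ) (X Y : Matrix (Fin n) (Fin n) ℝ) (k m : Fin n) :
    ∑ p, S * (X k p * Y m p) = S * (X * Yᵀ) k m := by
  rw [← Finset.mul_sum, Matrix.mul_apply]; simp only [Matrix.transpose_apply]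
lemma f0c (S : ℝ) (X Y : Matrix (Fin n) (Fin n) ℝ) (k m : Fin n) :
    ∑ p, S * (X p k * Y p m) = S * (Xᵀ * Y) k m := by
  rw [← Finset.mul_sum, Matrix.mul_apply]; simp only [Matrix.transpose_apply]
lemma d1 (S : Fin n → ℝ) (k : Fin n) :
    ∑ p, S p * (1 : Matrix (Fin n) (Fin n) ℝ) k p = S k := by
  simp [Matrix.one_apply]
lemma d2 (S : Fin n → ℝ) (k : Fin n) :
    ∑ p, S p * (1 : Matrix (Fin n) (Fin n) ℝ) p k = S k := by
  simp [Matrix.one_apply]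

lemma sc6 {F G : Fin n → Fin n → Fin n → Fin n → Fin n → Fin n → ℝ}
    (h : ∀ a b c d e f, F a b c d e f = G a b c d e f) :
    (∑ a, ∑ b, ∑ c, ∑ d, ∑ e, ∑ f, F a b c d e f)
      = ∑ a, ∑ b, ∑ c, ∑ d, ∑ e, ∑ f, G a b c d e f :=
  Finset.sum_congr rfl fun a _ => Finset.sum_congr rfl fun b _ =>
    Finset.sum_congr rfl fun c _ => Finset.sum_congr rfl fun d _ =>
      Finset.sum_congr rfl fun e _ => Finset.sum_congr rfl fun f _ => h a b c d e f

lemma dswap (F : Fin n → Fin n → ℝ) : ∑ l, ∑ m, F l m = ∑ l, ∑ m, F m l :=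
  Finset.sum_comm
lemma dswap' (F G : Fin n → Fin n → ℝ) (h : ∀ a b, F a b = G b a) :
    ∑ l, ∑ m, F l m = ∑ l, ∑ m, G l m := by
  rw [dswap F]
  exact Finset.sum_congr rfl fun l _ => Finset.sum_congr rfl fun m _ => h m l

lemma sumab3 (a b : ℝ) (F G : Fin n → Fin n → Fin n → ℝ) :
    (∑ i, ∑ j, ∑ l, (a * F i j l + b * G i j l))
      = a * (∑ i, ∑ j, ∑ l, F i j l) + b * (∑ i, ∑ j, ∑ l, G i j l) := by
  simp only [Finset.sum_add_distrib, ← Finset.mul_sum]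

/-! ### symmetry basics -/

lemma gsym (g : Matrix (Fin n) (Fin n) ℝ) (hs : g.IsSymm) (i j : Fin n) : g i j = g j i := by
  conv_lhs => rw [← hs.eq]
  rfl
lemma gisym (g : Matrix (Fin n) (Fin n) ℝ) (hs : g.IsSymm) (i j : Fin n) :
    g⁻¹ i j = g⁻¹ j i := by
  have h : (g⁻¹)ᵀ = g⁻¹ := by rw [Matrix.transpose_nonsing_inv, hs.eq]
  conv_lhs => rw [← h]
  rfl

/-! ### theta operator -/

def theta (A : Matrix (Fin n) (Fin n) ℝ) (μ : Fin n → Fin n → Fin n → ℝ) :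
    Fin n → Fin n → Fin n → ℝ :=
  fun i j k => (∑ l, A k l * μ i j l) - (∑ l, A l i * μ l j k) - (∑ l, A l j * μ i l k)

/-! ### tinner basics -/

lemma rot4 {M : Type*} [AddCommMonoid M] (F : Fin n → Fin n → Fin n → Fin n → M) :
    ∑ a, ∑ b, ∑ c, ∑ d, F a b c d = ∑ b, ∑ c, ∑ d, ∑ a, F a b c d := by
  rw [Finset.sum_comm]
  refine Finset.sum_congr rfl fun b _ => ?_
  rw [Finset.sum_comm]
  exact Finset.sum_congr rfl fun c _ => Finset.sum_comm

lemma swap4 {M : Type*} [AddCommMonoid M] (F : Fin n → Fin n → Fin n → Fin n → M) :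
    ∑ a, ∑ b, ∑ c, ∑ d, F a b c d = ∑ c, ∑ d, ∑ a, ∑ b, F a b c d := by
  rw [rot4]; rw [rot4]

lemma tinner_comm (g : Matrix (Fin n) (Fin n) ℝ) (hs : g.IsSymm)
    (μ ν : Fin n → Fin n → Fin n → ℝ) : tinner g μ ν = tinner g ν μ := by
  unfold tinner
  rw [swap4]
  refine Finset.sum_congr rfl fun p _ => Finset.sum_congr rfl fun q _ => ?_
  refine Finset.sum_congr rfl fun i _ => Finset.sum_congr rfl fun j _ => ?_
  unfold gdot
  rw [Finset.sum_comm]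
  rw [gisym g hs p i, gisym g hs q j]
  ring_nf
  refine congrArg _ ?_
  refine Finset.sum_congr rfl fun k _ => Finset.sum_congr rfl fun l _ => ?_
  rw [gsym g hs l k]
  ring

lemma tinner_theta_split (g : Matrix (Fin n) (Fin n) ℝ) (A : Matrix (Fin n) (Fin n) ℝ)
    (μ ν : Fin n → Fin n → Fin n → ℝ) :
    tinner g (theta A μ) ν
      = tinner g (fun i j k => ∑ l, A k l * μ i j l) ν
        - tinner g (fun i j k => ∑ l, A l i * μ l j k) ν
        - tinner g (fun i j k => ∑ l, A l j * μ i l k) ν := by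
  unfold tinner theta gdot
  simp only [sub_mul, mul_sub, Finset.sum_sub_distrib]

lemma tinner_theta_split_right (g : Matrix (Fin n) (Fin n) ℝ) (A : Matrix (Fin n) (Fin n) ℝ)
    (μ ν : Fin n → Fin n → Fin n → ℝ) :
    tinner g μ (theta A ν)
      = tinner g μ (fun i j k => ∑ l, A k l * ν i j l)
        - tinner g μ (fun i j k => ∑ l, A l i * ν l j k)
        - tinner g μ (fun i j k => ∑ l, A l j * ν i l k) := by
  unfold tinner theta gdot
  simp only [sub_mul, mul_sub, Finset.sum_sub_distrib]

lemma tinner_sub_right (g : Matrix (Fin n) (Fin n) ℝ) (μ x y : Fin n → Fin n → Fin n → ℝ) :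
    tinner g μ (fun i j k => x i j k - y i j k) = tinner g μ x - tinner g μ y := by
  unfold tinner gdot
  simp only [sub_mul, mul_sub, Finset.sum_sub_distrib]

/-! ### adjointness of theta -/

lemma gdot_conj (g : Matrix (Fin n) (Fin n) ℝ) (hu : IsUnit g.det)
    (A : Matrix (Fin n) (Fin n) ℝ) (x y : Fin n → ℝ) :
    gdot g (fun k => ∑ l, A k l * x l) y
      = gdot g x (fun k => ∑ l, (g⁻¹ * Aᵀ * g) k l * y l) := by
  have hgC : g * (g⁻¹ * Aᵀ * g) = Aᵀ * g := by
    rw [Matrix.mul_assoc g⁻¹, Matrix.mul_nonsing_inv_cancel_left g _ hu]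
  have hL : gdot g (fun k => ∑ l, A k l * x l) y = ∑ k, ∑ l, x k * (Aᵀ * g) k l * y l := by
    unfold gdot
    simp only [Finset.sum_mul]
    rw [show (∑ k, ∑ m, ∑ l, A k l * x l * g k m * y m)
        = ∑ l, ∑ m, ∑ k, (x l * y m) * (A k l * g k m) from by
      rw [← flat3 (fun k m l => A k l * x l * g k m * y m),
          ← flat3 (fun l m k => (x l * y m) * (A k l * g k m))]
      exact Fintype.sum_equiv ⟨fun ⟨k,m,l⟩ => ⟨l,m,k⟩, fun ⟨l,m,k⟩ => ⟨k,m,l⟩,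
        fun _ => rfl, fun _ => rfl⟩ _ _ (fun ⟨k,m,l⟩ => by dsimp; ring)]
    simp only [f0c]
    refine Finset.sum_congr rfl fun l _ => Finset.sum_congr rfl fun m _ => by ring
  have hR : gdot g x (fun k => ∑ l, (g⁻¹ * Aᵀ * g) k l * y l)
      = ∑ k, ∑ l, x k * (Aᵀ * g) k l * y l := by
    unfold gdot
    simp only [Finset.mul_sum]
    rw [show (∑ k, ∑ m, ∑ l, x k * g k m * ((g⁻¹ * Aᵀ * g) m l * y l))
        = ∑ k, ∑ l, ∑ m, (x k * y l) * (g k m * (g⁻¹ * Aᵀ * g) m l) from by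
      rw [← flat3 (fun k m l => x k * g k m * ((g⁻¹ * Aᵀ * g) m l * y l)),
          ← flat3 (fun k l m => (x k * y l) * (g k m * (g⁻¹ * Aᵀ * g) m l))]
      exact Fintype.sum_equiv ⟨fun ⟨k,m,l⟩ => ⟨k,l,m⟩, fun ⟨k,l,m⟩ => ⟨k,m,l⟩,
        fun _ => rfl, fun _ => rfl⟩ _ _ (fun ⟨k,m,l⟩ => by dsimp; ring)]
    simp only [f0a, hgC]
    refine Finset.sum_congr rfl fun k _ => Finset.sum_congr rfl fun l _ => by ring
  rw [hL, hR]

lemma F1out (g : Matrix (Fin n) (Fin n) ℝ) (hu : IsUnit g.det)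
    (A : Matrix (Fin n) (Fin n) ℝ) (μ ν : Fin n → Fin n → Fin n → ℝ) :
    tinner g (fun i j k => ∑ l, A k l * μ i j l) ν
      = tinner g μ (fun i j k => ∑ l, (g⁻¹ * Aᵀ * g) k l * ν i j l) := by
  unfold tinner
  refine Finset.sum_congr rfl fun i _ => Finset.sum_congr rfl fun j _ =>
    Finset.sum_congr rfl fun p _ => Finset.sum_congr rfl fun q _ => ?_
  exact congrArg (fun t => g⁻¹ i p * g⁻¹ j q * t) (gdot_conj g hu A (μ i j) (ν p q))

lemma F1s1 (g : Matrix (Fin n) (Fin n) ℝ) (hu : IsUnit g.det) (hs : g.IsSymm)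
    (A : Matrix (Fin n) (Fin n) ℝ) (μ ν : Fin n → Fin n → Fin n → ℝ) :
    tinner g (fun i j k => ∑ l, A l i * μ l j k) ν
      = tinner g μ (fun p q k => ∑ l, (g⁻¹ * Aᵀ * g) l p * ν l q k) := by
  have hACG : g⁻¹ * (g⁻¹ * Aᵀ * g)ᵀ = A * g⁻¹ := by
    rw [Matrix.transpose_mul, Matrix.transpose_mul, Matrix.transpose_transpose,
        Matrix.transpose_nonsing_inv, hs.eq, Matrix.nonsing_inv_mul_cancel_left g _ hu]
  have hL : tinner g (fun i j k => ∑ l, A l i * μ l j k) ν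
      = ∑ i, ∑ j, ∑ p, ∑ q, (A * g⁻¹) i p * g⁻¹ j q * gdot g (μ i j) (ν p q) := by
    unfold tinner gdot
    simp only [Finset.sum_mul, Finset.mul_sum]
    rw [show (∑ i, ∑ j, ∑ p, ∑ q, ∑ k, ∑ l, ∑ m,
          g⁻¹ i p * g⁻¹ j q * (A m i * μ m j k * g k l * ν p q l))
        = ∑ a, ∑ b, ∑ c, ∑ d, ∑ e, ∑ f, ∑ h,
          (g⁻¹ b d * μ a b e * g e f * ν c d f) * (A a h * g⁻¹ h c) from by
      rw [← flat7 (fun i j p q k l m => g⁻¹ i p * g⁻¹ j q * (A m i * μ m j k * g k l * ν p q l)),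
          ← flat7 (fun a b c d e f h => (g⁻¹ b d * μ a b e * g e f * ν c d f) * (A a h * g⁻¹ h c))]
      exact Fintype.sum_equiv ⟨fun ⟨i,j,p,q,k,l,m⟩ => ⟨m,j,p,q,k,l,i⟩,
        fun ⟨i,j,p,q,k,l,m⟩ => ⟨m,j,p,q,k,l,i⟩, fun _ => rfl, fun _ => rfl⟩ _ _
        (fun ⟨i,j,p,q,k,l,m⟩ => by dsimp; ring)]
    simp only [f0a]
    exact sc6 fun a b c d e f => by ring
  have hR : tinner g μ (fun p q k => ∑ l, (g⁻¹ * Aᵀ * g) l p * ν l q k)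
      = ∑ i, ∑ j, ∑ p, ∑ q, (A * g⁻¹) i p * g⁻¹ j q * gdot g (μ i j) (ν p q) := by
    unfold tinner gdot
    simp only [Finset.sum_mul, Finset.mul_sum]
    rw [show (∑ i, ∑ j, ∑ p, ∑ q, ∑ k, ∑ l, ∑ m,
          g⁻¹ i p * g⁻¹ j q * (μ i j k * g k l * ((g⁻¹ * Aᵀ * g) m p * ν m q l)))
        = ∑ a, ∑ b, ∑ c, ∑ d, ∑ e, ∑ f, ∑ h,
          (g⁻¹ b d * μ a b e * g e f * ν c d f) * (g⁻¹ a h * (g⁻¹ * Aᵀ * g) c h) from by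
      rw [← flat7 (fun i j p q k l m =>
            g⁻¹ i p * g⁻¹ j q * (μ i j k * g k l * ((g⁻¹ * Aᵀ * g) m p * ν m q l))),
          ← flat7 (fun a b c d e f h =>
            (g⁻¹ b d * μ a b e * g e f * ν c d f) * (g⁻¹ a h * (g⁻¹ * Aᵀ * g) c h))]
      exact Fintype.sum_equiv ⟨fun ⟨i,j,p,q,k,l,m⟩ => ⟨i,j,m,q,k,l,p⟩,
        fun ⟨i,j,p,q,k,l,m⟩ => ⟨i,j,m,q,k,l,p⟩, fun _ => rfl, fun _ => rfl⟩ _ _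
        (fun ⟨i,j,p,q,k,l,m⟩ => by dsimp; ring)]
    simp only [f0b, hACG]
    exact sc6 fun a b c d e f => by ring
  rw [hL, hR]

lemma F1s2 (g : Matrix (Fin n) (Fin n) ℝ) (hu : IsUnit g.det) (hs : g.IsSymm)
    (A : Matrix (Fin n) (Fin n) ℝ) (μ ν : Fin n → Fin n → Fin n → ℝ) :
    tinner g (fun i j k => ∑ l, A l j * μ i l k) ν
      = tinner g μ (fun p q k => ∑ l, (g⁻¹ * Aᵀ * g) l q * ν p l k) := by
  have hACG : g⁻¹ * (g⁻¹ * Aᵀ * g)ᵀ = A * g⁻¹ := by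
    rw [Matrix.transpose_mul, Matrix.transpose_mul, Matrix.transpose_transpose,
        Matrix.transpose_nonsing_inv, hs.eq, Matrix.nonsing_inv_mul_cancel_left g _ hu]
  have hL : tinner g (fun i j k => ∑ l, A l j * μ i l k) ν
      = ∑ i, ∑ j, ∑ p, ∑ q, g⁻¹ i p * (A * g⁻¹) j q * gdot g (μ i j) (ν p q) := by
    unfold tinner gdot
    simp only [Finset.sum_mul, Finset.mul_sum]
    rw [show (∑ i, ∑ j, ∑ p, ∑ q, ∑ k, ∑ l, ∑ m,
          g⁻¹ i p * g⁻¹ j q * (A m j * μ i m k * g k l * ν p q l))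
        = ∑ a, ∑ b, ∑ c, ∑ d, ∑ e, ∑ f, ∑ h,
          (g⁻¹ a c * μ a b e * g e f * ν c d f) * (A b h * g⁻¹ h d) from by
      rw [← flat7 (fun i j p q k l m => g⁻¹ i p * g⁻¹ j q * (A m j * μ i m k * g k l * ν p q l)),
          ← flat7 (fun a b c d e f h => (g⁻¹ a c * μ a b e * g e f * ν c d f) * (A b h * g⁻¹ h d))]
      exact Fintype.sum_equiv ⟨fun ⟨i,j,p,q,k,l,m⟩ => ⟨i,m,p,q,k,l,j⟩,
        fun ⟨i,j,p,q,k,l,m⟩ => ⟨i,m,p,q,k,l,j⟩, fun _ => rfl, fun _ => rfl⟩ _ _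
        (fun ⟨i,j,p,q,k,l,m⟩ => by dsimp; ring)]
    simp only [f0a]
    exact sc6 fun a b c d e f => by ring
  have hR : tinner g μ (fun p q k => ∑ l, (g⁻¹ * Aᵀ * g) l q * ν p l k)
      = ∑ i, ∑ j, ∑ p, ∑ q, g⁻¹ i p * (A * g⁻¹) j q * gdot g (μ i j) (ν p q) := by
    unfold tinner gdot
    simp only [Finset.sum_mul, Finset.mul_sum]
    rw [show (∑ i, ∑ j, ∑ p, ∑ q, ∑ k, ∑ l, ∑ m,
          g⁻¹ i p * g⁻¹ j q * (μ i j k * g k l * ((g⁻¹ * Aᵀ * g) m q * ν p m l)))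
        = ∑ a, ∑ b, ∑ c, ∑ d, ∑ e, ∑ f, ∑ h,
          (g⁻¹ a c * μ a b e * g e f * ν c d f) * (g⁻¹ b h * (g⁻¹ * Aᵀ * g) d h) from by
      rw [← flat7 (fun i j p q k l m =>
            g⁻¹ i p * g⁻¹ j q * (μ i j k * g k l * ((g⁻¹ * Aᵀ * g) m q * ν p m l))),
          ← flat7 (fun a b c d e f h =>
            (g⁻¹ a c * μ a b e * g e f * ν c d f) * (g⁻¹ b h * (g⁻¹ * Aᵀ * g) d h))]
      exact Fintype.sum_equiv ⟨fun ⟨i,j,p,q,k,l,m⟩ => ⟨i,j,p,m,k,l,q⟩,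
        fun ⟨i,j,p,q,k,l,m⟩ => ⟨i,j,p,m,k,l,q⟩, fun _ => rfl, fun _ => rfl⟩ _ _
        (fun ⟨i,j,p,q,k,l,m⟩ => by dsimp; ring)]
    simp only [f0b, hACG]
    exact sc6 fun a b c d e f => by ring
  rw [hL, hR]

lemma F1 (g : Matrix (Fin n) (Fin n) ℝ) (hu : IsUnit g.det) (hs : g.IsSymm)
    (A : Matrix (Fin n) (Fin n) ℝ) (μ ν : Fin n → Fin n → Fin n → ℝ) :
    tinner g (theta A μ) ν = tinner g μ (theta (g⁻¹ * Aᵀ * g) ν) := by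
  rw [tinner_theta_split, tinner_theta_split_right, F1out g hu, F1s1 g hu hs, F1s2 g hu hs]

/-! ### theta is a representation -/

lemma F2 (A B : Matrix (Fin n) (Fin n) ℝ) (μ : Fin n → Fin n → Fin n → ℝ) (i j k : Fin n) :
    theta A (theta B μ) i j k - theta B (theta A μ) i j k
      = theta (A * B - B * A) μ i j k := by
  unfold theta
  simp only [Matrix.sub_apply, Matrix.mul_apply, mul_sub, sub_mul, Finset.sum_sub_distrib,
    Finset.mul_sum, Finset.sum_mul]
  ring_nf
  rw [dswap' (fun l m => A k l * B l m * μ i j m) (fun l m => A k m * B m l * μ i j l) (fun a b => by ring)]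
  rw [dswap' (fun l m => A l i * B m l * μ m j k) (fun l m => B l m * A m i * μ l j k) (fun a b => by ring)]
  rw [dswap' (fun l m => A l j * B m l * μ i m k) (fun l m => B l m * A m j * μ i l k) (fun a b => by ring)]
  rw [dswap' (fun l m => B k l * A l m * μ i j m) (fun l m => B k m * A m l * μ i j l) (fun a b => by ring)]
  rw [dswap' (fun l m => B k l * A m i * μ m j l) (fun l m => A l i * B k m * μ l j m) (fun a b => by ring)]
  rw [dswap' (fun l m => B k l * A m j * μ i m l) (fun l m => A l j * B k m * μ i l m) (fun a b => by ring)]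
  rw [dswap' (fun l m => B l i * A k m * μ l j m) (fun l m => A k l * B m i * μ m j l) (fun a b => by ring)]
  rw [dswap' (fun l m => B l i * A m l * μ m j k) (fun l m => A l m * B m i * μ l j k) (fun a b => by ring)]
  rw [dswap' (fun l m => B l i * A m j * μ l m k) (fun l m => A l j * B m i * μ m l k) (fun a b => by ring)]
  rw [dswap' (fun l m => B l j * A k m * μ i l m) (fun l m => A k l * B m j * μ i m l) (fun a b => by ring)]
  rw [dswap' (fun l m => B l j * A m i * μ m l k) (fun l m => A l i * B m j * μ l m k) (fun a b => by ring)]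
  rw [dswap' (fun l m => B l j * A m l * μ i m k) (fun l m => A l m * B m j * μ i l k) (fun a b => by ring)]
  ring

/-! ### the moment-map identity L1 -/

lemma L1 (c : Fin n → Fin n → Fin n → ℝ) (hc : ∀ i j k, c i j k = - c j i k)
    (g : Matrix (Fin n) (Fin n) ℝ) (hu : IsUnit g.det) (hs : g.IsSymm)
    (A : Matrix (Fin n) (Fin n) ℝ) :
    einner g (Rc c g) A = 4⁻¹ * tinner g (theta A c) c := by
  have hgig : (g⁻¹)ᵀ * g = 1 := by
    rw [Matrix.transpose_nonsing_inv, hs.eq, Matrix.nonsing_inv_mul g hu]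
  have hggi : g * g⁻¹ = 1 := Matrix.mul_nonsing_inv g hu
  have eL : einner g (Rc c g) A = ∑ i, ∑ j, ∑ l, g⁻¹ i j * Ricm c g l i * A l j := by
    unfold einner gdot Rc
    simp only [Matrix.mul_apply, Finset.sum_mul, Finset.mul_sum]
    rw [show (∑ i, ∑ j, ∑ k, ∑ l, ∑ m,
          g⁻¹ i j * (g⁻¹ k m * Ricm c g m i * g k l * A l j))
        = ∑ i, ∑ j, ∑ l, ∑ m, ∑ k, (g⁻¹ i j * Ricm c g m i * A l j) * (g⁻¹ k m * g k l) from by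
      rw [← flat5 (fun i j k l m => g⁻¹ i j * (g⁻¹ k m * Ricm c g m i * g k l * A l j)),
          ← flat5 (fun i j l m k => (g⁻¹ i j * Ricm c g m i * A l j) * (g⁻¹ k m * g k l))]
      exact Fintype.sum_equiv ⟨fun ⟨i,j,k,l,m⟩ => ⟨i,j,l,m,k⟩, fun ⟨i,j,l,m,k⟩ => ⟨i,j,k,l,m⟩,
        fun _ => rfl, fun _ => rfl⟩ _ _ (fun ⟨i,j,k,l,m⟩ => by dsimp; ring)]
    simp only [f0c, hgig, d2]
  have esplit : (∑ i, ∑ j, ∑ l, g⁻¹ i j * Ricm c g l i * A l j)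
      = -(1/2) * (∑ i, ∑ j, ∑ l, g⁻¹ i j *
            (∑ p, ∑ q, g⁻¹ p q * gdot g (c l p) (c i q)) * A l j)
        + (1/4) * (∑ i, ∑ j, ∑ l, g⁻¹ i j *
            (∑ p, ∑ q, ∑ r, ∑ s, g⁻¹ p r * g⁻¹ q s *
              (∑ k, c p q k * g k l) * (∑ m, c r s m * g m i)) * A l j) := by
    rw [show (∑ i, ∑ j, ∑ l, g⁻¹ i j * Ricm c g l i * A l j)
        = ∑ i, ∑ j, ∑ l,
            (-(1/2) * (g⁻¹ i j * (∑ p, ∑ q, g⁻¹ p q * gdot g (c l p) (c i q)) * A l j)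
              + (1/4) * (g⁻¹ i j * (∑ p, ∑ q, ∑ r, ∑ s, g⁻¹ p r * g⁻¹ q s *
                  (∑ k, c p q k * g k l) * (∑ m, c r s m * g m i)) * A l j)) from
      Finset.sum_congr rfl fun i _ => Finset.sum_congr rfl fun j _ =>
        Finset.sum_congr rfl fun l _ => by
          simp only [Ricm, Matrix.of_apply]; ring]
    exact sumab3 _ _ _ _
  have eX2red : (∑ i, ∑ j, ∑ l, g⁻¹ i j *
        (∑ p, ∑ q, ∑ r, ∑ s, g⁻¹ p r * g⁻¹ q s *
          (∑ k, c p q k * g k l) * (∑ m, c r s m * g m i)) * A l j)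
      = ∑ j, ∑ l, ∑ p, ∑ q, ∑ r, ∑ s, ∑ k,
          A l j * g⁻¹ p r * g⁻¹ q s * c p q k * g k l * c r s j := by
    simp only [Finset.sum_mul, Finset.mul_sum]
    rw [show (∑ i, ∑ j, ∑ l, ∑ p, ∑ q, ∑ r, ∑ s, ∑ m, ∑ k,
          g⁻¹ i j * (g⁻¹ p r * g⁻¹ q s * (c p q k * g k l) * (c r s m * g m i)) * A l j)
        = ∑ j, ∑ l, ∑ p, ∑ q, ∑ r, ∑ s, ∑ k, ∑ m, ∑ i,
          (A l j * g⁻¹ p r * g⁻¹ q s * c p q k * g k l * c r s m) * (g m i * g⁻¹ i j) from by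
      rw [← flat9 (fun i j l p q r s m k =>
            g⁻¹ i j * (g⁻¹ p r * g⁻¹ q s * (c p q k * g k l) * (c r s m * g m i)) * A l j),
          ← flat9 (fun j l p q r s k m i =>
            (A l j * g⁻¹ p r * g⁻¹ q s * c p q k * g k l * c r s m) * (g m i * g⁻¹ i j))]
      exact Fintype.sum_equiv
        ⟨fun ⟨i,j,l,p,q,r,s,m,k⟩ => ⟨j,l,p,q,r,s,k,m,i⟩,
         fun ⟨j,l,p,q,r,s,k,m,i⟩ => ⟨i,j,l,p,q,r,s,m,k⟩,
         fun _ => rfl, fun _ => rfl⟩ _ _ (fun ⟨i,j,l,p,q,r,s,m,k⟩ => by dsimp; ring)]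
    simp only [f0a, hggi, d2]
  have eT1 : tinner g (fun i j k => ∑ m, A k m * c i j m) c
      = ∑ j, ∑ l, ∑ p, ∑ q, ∑ r, ∑ s, ∑ k,
          A l j * g⁻¹ p r * g⁻¹ q s * c p q k * g k l * c r s j := by
    unfold tinner gdot
    simp only [Finset.sum_mul, Finset.mul_sum]
    rw [← flat7 (fun i j p q k l m =>
          g⁻¹ i p * g⁻¹ j q * (A k m * c i j m * g k l * c p q l)),
        ← flat7 (fun j l p q r s k =>
          A l j * g⁻¹ p r * g⁻¹ q s * c p q k * g k l * c r s j)]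
    exact Fintype.sum_equiv
      ⟨fun ⟨i,j,p,q,k,l,m⟩ => ⟨m,k,p,q,i,j,l⟩, fun ⟨m,k,p,q,i,j,l⟩ => ⟨i,j,p,q,k,l,m⟩,
       fun _ => rfl, fun _ => rfl⟩ _ _
      (fun ⟨i,j,p,q,k,l,m⟩ => by
        dsimp
        rw [gisym g hs p i, gisym g hs q j, gsym g hs l k]
        ring)
  have eT2 : tinner g (fun i j k => ∑ m, A m i * c m j k) c
      = ∑ i, ∑ j, ∑ l, g⁻¹ i j *
          (∑ p, ∑ q, g⁻¹ p q * gdot g (c l p) (c i q)) * A l j := by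
    unfold tinner gdot
    simp only [Finset.sum_mul, Finset.mul_sum]
    rw [← flat7 (fun i j p q k l m =>
          g⁻¹ i p * g⁻¹ j q * (A m i * c m j k * g k l * c p q l)),
        ← flat7 (fun i j l p q k m =>
          g⁻¹ i j * (g⁻¹ p q * (c l p k * g k m * c i q m)) * A l j)]
    exact Fintype.sum_equiv
      ⟨fun ⟨i,j,p,q,k,l,m⟩ => ⟨p,i,m,j,q,k,l⟩, fun ⟨p,i,m,j,q,k,l⟩ => ⟨i,j,p,q,k,l,m⟩,
       fun _ => rfl, fun _ => rfl⟩ _ _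
      (fun ⟨i,j,p,q,k,l,m⟩ => by
        dsimp
        rw [gisym g hs p i]
        ring)
  have eT32 : tinner g (fun i j k => ∑ m, A m j * c i m k) c
      = tinner g (fun i j k => ∑ m, A m i * c m j k) c := by
    unfold tinner gdot
    simp only [Finset.sum_mul, Finset.mul_sum]
    rw [← flat7 (fun i j p q k l m =>
          g⁻¹ i p * g⁻¹ j q * (A m j * c i m k * g k l * c p q l)),
        ← flat7 (fun i j p q k l m =>
          g⁻¹ i p * g⁻¹ j q * (A m i * c m j k * g k l * c p q l))]
    exact Fintype.sum_equiv
      ⟨fun ⟨i,j,p,q,k,l,m⟩ => ⟨j,i,q,p,k,l,m⟩, fun ⟨i,j,p,q,k,l,m⟩ => ⟨j,i,q,p,k,l,m⟩,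
       fun _ => rfl, fun _ => rfl⟩ _ _
      (fun ⟨i,j,p,q,k,l,m⟩ => by
        dsimp
        rw [hc i m k, hc p q l]
        ring)
  rw [eL, esplit, tinner_theta_split, eT32, eT1, ← eT2, ← eX2red]
  ring

/-! ### matrix identities -/

lemma hBT (g H : Matrix (Fin n) (Fin n) ℝ) (hs : g.IsSymm) (hH : H.IsSymm) :
    g⁻¹ * (g⁻¹ * H)ᵀ = g⁻¹ * H * g⁻¹ := by
  rw [Matrix.transpose_mul, Matrix.transpose_nonsing_inv, hs.eq, hH.eq, ← Matrix.mul_assoc]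

lemma astar_astar (g A : Matrix (Fin n) (Fin n) ℝ) (hu : IsUnit g.det) (hs : g.IsSymm) :
    g⁻¹ * (g⁻¹ * Aᵀ * g)ᵀ * g = A := by
  rw [Matrix.transpose_mul, Matrix.transpose_mul, Matrix.transpose_transpose,
      Matrix.transpose_nonsing_inv, hs.eq, Matrix.nonsing_inv_mul_cancel_left g _ hu,
      Matrix.mul_assoc, Matrix.nonsing_inv_mul g hu, Matrix.mul_one]

lemma B_selfadj (g H : Matrix (Fin n) (Fin n) ℝ) (hu : IsUnit g.det) (hs : g.IsSymm)
    (hH : H.IsSymm) : g⁻¹ * (g⁻¹ * H)ᵀ * g = g⁻¹ * H := by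
  rw [hBT g H hs hH, Matrix.mul_assoc, Matrix.nonsing_inv_mul g hu, Matrix.mul_one]

/-! ### L3 : the adjoint relation -/

lemma L3 (c : Fin n → Fin n → Fin n → ℝ) (g : Matrix (Fin n) (Fin n) ℝ)
    (hu : IsUnit g.det) (hs : g.IsSymm) (A B : Matrix (Fin n) (Fin n) ℝ)
    (hB : g⁻¹ * Bᵀ * g = B) :
    tinner g (theta (g⁻¹ * Aᵀ * g) c) (theta B c)
      = tinner g (theta B c) (theta A c) + tinner g c (theta (A * B - B * A) c) := by
  have h1 : tinner g (theta (g⁻¹ * Aᵀ * g) c) (theta B c)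
      = tinner g c (theta A (theta B c)) := by
    rw [F1 g hu hs (g⁻¹ * Aᵀ * g) c (theta B c), astar_astar g A hu hs]
  have h2 : tinner g (theta B c) (theta A c) = tinner g c (theta B (theta A c)) := by
    rw [F1 g hu hs B c (theta A c), hB]
  have h3 : tinner g c (fun i j k => theta A (theta B c) i j k - theta B (theta A c) i j k)
      = tinner g c (theta (A * B - B * A) c) := by
    refine congrArg (tinner g c) ?_
    funext i j k
    exact F2 A B c i j k
  rw [tinner_sub_right] at h3
  rw [h1, h2]
  linarith

/-! ### L2 : derivative of ⟨μ, c⟩ -/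

lemma L2 (c : Fin n → Fin n → Fin n → ℝ) (g : Matrix (Fin n) (Fin n) ℝ)
    (hu : IsUnit g.det) (hs : g.IsSymm) (H : Matrix (Fin n) (Fin n) ℝ) (hH : H.IsSymm)
    (μ : Fin n → Fin n → Fin n → ℝ) :
    (∑ i, ∑ j, ∑ p, ∑ q,
        (((-(g⁻¹ * H * g⁻¹)) i p * g⁻¹ j q + g⁻¹ i p * (-(g⁻¹ * H * g⁻¹)) j q)
            * gdot g (μ i j) (c p q)
          + g⁻¹ i p * g⁻¹ j q * ∑ k, ∑ l, μ i j k * H k l * c p q l))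
      = tinner g μ (theta (g⁻¹ * H) c) := by
  have hgB : g * (g⁻¹ * H) = H := Matrix.mul_nonsing_inv_cancel_left g H hu
  -- split LHS
  have eLHS : (∑ i, ∑ j, ∑ p, ∑ q,
        (((-(g⁻¹ * H * g⁻¹)) i p * g⁻¹ j q + g⁻¹ i p * (-(g⁻¹ * H * g⁻¹)) j q)
            * gdot g (μ i j) (c p q)
          + g⁻¹ i p * g⁻¹ j q * ∑ k, ∑ l, μ i j k * H k l * c p q l))
      = (∑ i, ∑ j, ∑ p, ∑ q, (-(g⁻¹ * H * g⁻¹)) i p * g⁻¹ j q * gdot g (μ i j) (c p q))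
        + (∑ i, ∑ j, ∑ p, ∑ q, g⁻¹ i p * (-(g⁻¹ * H * g⁻¹)) j q * gdot g (μ i j) (c p q))
        + (∑ i, ∑ j, ∑ p, ∑ q, g⁻¹ i p * g⁻¹ j q * ∑ k, ∑ l, μ i j k * H k l * c p q l) := by
    simp only [add_mul, Finset.sum_add_distrib]
  rw [eLHS, tinner_theta_split_right]
  -- R1 = P3
  have hR1 : tinner g μ (fun i j k => ∑ l, (g⁻¹ * H) k l * c i j l)
      = ∑ i, ∑ j, ∑ p, ∑ q, g⁻¹ i p * g⁻¹ j q * ∑ k, ∑ l, μ i j k * H k l * c p q l := by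
    have e1 : tinner g μ (fun i j k => ∑ l, (g⁻¹ * H) k l * c i j l)
        = ∑ i, ∑ j, ∑ p, ∑ q, ∑ k, ∑ m, (g⁻¹ i p * g⁻¹ j q * μ i j k * c p q m) * H k m := by
      unfold tinner gdot
      simp only [Finset.sum_mul, Finset.mul_sum]
      rw [show (∑ i, ∑ j, ∑ p, ∑ q, ∑ k, ∑ l, ∑ m,
            g⁻¹ i p * g⁻¹ j q * (μ i j k * g k l * ((g⁻¹ * H) l m * c p q m)))
          = ∑ i, ∑ j, ∑ p, ∑ q, ∑ k, ∑ m, ∑ l,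
            (g⁻¹ i p * g⁻¹ j q * μ i j k * c p q m) * (g k l * (g⁻¹ * H) l m) from by
        rw [← flat7 (fun i j p q k l m =>
              g⁻¹ i p * g⁻¹ j q * (μ i j k * g k l * ((g⁻¹ * H) l m * c p q m))),
            ← flat7 (fun i j p q k m l =>
              (g⁻¹ i p * g⁻¹ j q * μ i j k * c p q m) * (g k l * (g⁻¹ * H) l m))]
        exact Fintype.sum_equiv
          ⟨fun ⟨i,j,p,q,k,l,m⟩ => ⟨i,j,p,q,k,m,l⟩, fun ⟨i,j,p,q,k,m,l⟩ => ⟨i,j,p,q,k,l,m⟩,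
           fun _ => rfl, fun _ => rfl⟩ _ _ (fun ⟨i,j,p,q,k,l,m⟩ => by dsimp; ring)]
      simp only [f0a, hgB]
    rw [e1]
    refine Finset.sum_congr rfl fun i _ => Finset.sum_congr rfl fun j _ =>
      Finset.sum_congr rfl fun p _ => Finset.sum_congr rfl fun q _ => ?_
    rw [Finset.mul_sum]
    refine Finset.sum_congr rfl fun k _ => ?_
    rw [Finset.mul_sum]
    exact Finset.sum_congr rfl fun m _ => by ring
  -- R2 = - P1
  have hR2 : tinner g μ (fun p q k => ∑ l, (g⁻¹ * H) l p * c l q k)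
      = - (∑ i, ∑ j, ∑ p, ∑ q, (-(g⁻¹ * H * g⁻¹)) i p * g⁻¹ j q * gdot g (μ i j) (c p q)) := by
    have e1 : tinner g μ (fun p q k => ∑ l, (g⁻¹ * H) l p * c l q k)
        = ∑ i, ∑ j, ∑ q, ∑ k, ∑ l, ∑ m,
            (g⁻¹ j q * μ i j k * g k l * c m q l) * (g⁻¹ * H * g⁻¹) i m := by
      unfold tinner gdot
      simp only [Finset.sum_mul, Finset.mul_sum]
      rw [show (∑ i, ∑ j, ∑ p, ∑ q, ∑ k, ∑ l, ∑ m,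
            g⁻¹ i p * g⁻¹ j q * (μ i j k * g k l * ((g⁻¹ * H) m p * c m q l)))
          = ∑ i, ∑ j, ∑ q, ∑ k, ∑ l, ∑ m, ∑ p,
            (g⁻¹ j q * μ i j k * g k l * c m q l) * (g⁻¹ i p * (g⁻¹ * H) m p) from by
        rw [← flat7 (fun i j p q k l m =>
              g⁻¹ i p * g⁻¹ j q * (μ i j k * g k l * ((g⁻¹ * H) m p * c m q l))),
            ← flat7 (fun i j q k l m p =>
              (g⁻¹ j q * μ i j k * g k l * c m q l) * (g⁻¹ i p * (g⁻¹ * H) m p))]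
        exact Fintype.sum_equiv
          ⟨fun ⟨i,j,p,q,k,l,m⟩ => ⟨i,j,q,k,l,m,p⟩, fun ⟨i,j,q,k,l,m,p⟩ => ⟨i,j,p,q,k,l,m⟩,
           fun _ => rfl, fun _ => rfl⟩ _ _ (fun ⟨i,j,p,q,k,l,m⟩ => by dsimp; ring)]
      simp only [f0b, hBT g H hs hH]
    have e2 : (∑ i, ∑ j, ∑ p, ∑ q, (-(g⁻¹ * H * g⁻¹)) i p * g⁻¹ j q * gdot g (μ i j) (c p q))
        = ∑ i, ∑ j, ∑ q, ∑ k, ∑ l, ∑ m,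
            -((g⁻¹ j q * μ i j k * g k l * c m q l) * (g⁻¹ * H * g⁻¹) i m) := by
      unfold gdot
      simp only [Finset.sum_mul, Finset.mul_sum]
      rw [← flat6 (fun i j p q k l =>
            (-(g⁻¹ * H * g⁻¹)) i p * g⁻¹ j q * (μ i j k * g k l * c p q l)),
          ← flat6 (fun i j q k l m =>
            -((g⁻¹ j q * μ i j k * g k l * c m q l) * (g⁻¹ * H * g⁻¹) i m))]
      exact Fintype.sum_equiv
        ⟨fun ⟨i,j,p,q,k,l⟩ => ⟨i,j,q,k,l,p⟩, fun ⟨i,j,q,k,l,p⟩ => ⟨i,j,p,q,k,l⟩,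
         fun _ => rfl, fun _ => rfl⟩ _ _
        (fun ⟨i,j,p,q,k,l⟩ => by dsimp [Matrix.neg_apply]; ring)
    rw [e1, e2]
    simp only [Finset.sum_neg_distrib, neg_neg]
  -- R3 = - P2
  have hR3 : tinner g μ (fun p q k => ∑ l, (g⁻¹ * H) l q * c p l k)
      = - (∑ i, ∑ j, ∑ p, ∑ q, g⁻¹ i p * (-(g⁻¹ * H * g⁻¹)) j q * gdot g (μ i j) (c p q)) := by
    have e1 : tinner g μ (fun p q k => ∑ l, (g⁻¹ * H) l q * c p l k)
        = ∑ i, ∑ j, ∑ p, ∑ k, ∑ l, ∑ m,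
            (g⁻¹ i p * μ i j k * g k l * c p m l) * (g⁻¹ * H * g⁻¹) j m := by
      unfold tinner gdot
      simp only [Finset.sum_mul, Finset.mul_sum]
      rw [show (∑ i, ∑ j, ∑ p, ∑ q, ∑ k, ∑ l, ∑ m,
            g⁻¹ i p * g⁻¹ j q * (μ i j k * g k l * ((g⁻¹ * H) m q * c p m l)))
          = ∑ i, ∑ j, ∑ p, ∑ k, ∑ l, ∑ m, ∑ q,
            (g⁻¹ i p * μ i j k * g k l * c p m l) * (g⁻¹ j q * (g⁻¹ * H) m q) from by
        rw [← flat7 (fun i j p q k l m =>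
              g⁻¹ i p * g⁻¹ j q * (μ i j k * g k l * ((g⁻¹ * H) m q * c p m l))),
            ← flat7 (fun i j p k l m q =>
              (g⁻¹ i p * μ i j k * g k l * c p m l) * (g⁻¹ j q * (g⁻¹ * H) m q))]
        exact Fintype.sum_equiv
          ⟨fun ⟨i,j,p,q,k,l,m⟩ => ⟨i,j,p,k,l,m,q⟩, fun ⟨i,j,p,k,l,m,q⟩ => ⟨i,j,p,q,k,l,m⟩,
           fun _ => rfl, fun _ => rfl⟩ _ _ (fun ⟨i,j,p,q,k,l,m⟩ => by dsimp; ring)]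
      simp only [f0b, hBT g H hs hH]
    have e2 : (∑ i, ∑ j, ∑ p, ∑ q, g⁻¹ i p * (-(g⁻¹ * H * g⁻¹)) j q * gdot g (μ i j) (c p q))
        = ∑ i, ∑ j, ∑ p, ∑ k, ∑ l, ∑ m,
            -((g⁻¹ i p * μ i j k * g k l * c p m l) * (g⁻¹ * H * g⁻¹) j m) := by
      unfold gdot
      simp only [Finset.sum_mul, Finset.mul_sum]
      rw [← flat6 (fun i j p q k l =>
            g⁻¹ i p * (-(g⁻¹ * H * g⁻¹)) j q * (μ i j k * g k l * c p q l)),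
          ← flat6 (fun i j p k l m =>
            -((g⁻¹ i p * μ i j k * g k l * c p m l) * (g⁻¹ * H * g⁻¹) j m))]
      exact Fintype.sum_equiv
        ⟨fun ⟨i,j,p,q,k,l⟩ => ⟨i,j,p,k,l,q⟩, fun ⟨i,j,p,k,l,q⟩ => ⟨i,j,p,q,k,l⟩,
         fun _ => rfl, fun _ => rfl⟩ _ _
        (fun ⟨i,j,p,q,k,l⟩ => by dsimp [Matrix.neg_apply]; ring)
    rw [e1, e2]
    simp only [Finset.sum_neg_distrib, neg_neg]
  rw [hR1, hR2, hR3]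
  ring

/-! ### L4 : metric-derivative of einner -/

lemma L4 (g : Matrix (Fin n) (Fin n) ℝ) (hu : IsUnit g.det) (hs : g.IsSymm)
    (H : Matrix (Fin n) (Fin n) ℝ) (hH : H.IsSymm) (P A : Matrix (Fin n) (Fin n) ℝ) :
    (∑ i, ∑ j, (-(g⁻¹ * H * g⁻¹)) i j * gdot g (fun k => P k i) (fun k => A k j))
      + (∑ i, ∑ j, g⁻¹ i j * ∑ k, ∑ l, P k i * H k l * A l j)
      = - einner g P (A * (g⁻¹ * H) - (g⁻¹ * H) * A) := by
  have hy : g * (g⁻¹ * H * A) = H * A := by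
    rw [Matrix.mul_assoc g⁻¹ H A, Matrix.mul_nonsing_inv_cancel_left g _ hu]
  have hz : g⁻¹ * (A * (g⁻¹ * H))ᵀ = g⁻¹ * H * g⁻¹ * Aᵀ := by
    rw [Matrix.transpose_mul, Matrix.transpose_mul, Matrix.transpose_nonsing_inv,
        hs.eq, hH.eq]
    simp only [Matrix.mul_assoc]
  -- LHS part 2 = E2-shape
  have h2 : (∑ i, ∑ j, g⁻¹ i j * ∑ k, ∑ l, P k i * H k l * A l j)
      = ∑ i, ∑ j, ∑ k, (g⁻¹ i j * P k i) * (H * A) k j := by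
    simp only [Finset.mul_sum]
    rw [show (∑ i, ∑ j, ∑ k, ∑ l, g⁻¹ i j * (P k i * H k l * A l j))
        = ∑ i, ∑ j, ∑ k, ∑ l, (g⁻¹ i j * P k i) * (H k l * A l j) from
      Finset.sum_congr rfl fun i _ => Finset.sum_congr rfl fun j _ =>
        Finset.sum_congr rfl fun k _ => Finset.sum_congr rfl fun l _ => by ring]
    simp only [f0a]
  have hE2 : (∑ i, ∑ j, g⁻¹ i j * gdot g (fun k => P k i)
        (fun k => ((g⁻¹ * H) * A) k j))
      = ∑ i, ∑ j, ∑ k, (g⁻¹ i j * P k i) * (H * A) k j := by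
    unfold gdot
    rw [show (∑ i, ∑ j, g⁻¹ i j * ∑ k, ∑ l, P k i * g k l * ((g⁻¹ * H) * A) l j)
        = ∑ i, ∑ j, ∑ k, ∑ l, (g⁻¹ i j * P k i) * (g k l * (g⁻¹ * H * A) l j) from by
      simp only [Finset.mul_sum]
      exact Finset.sum_congr rfl fun i _ => Finset.sum_congr rfl fun j _ =>
        Finset.sum_congr rfl fun k _ => Finset.sum_congr rfl fun l _ => by ring]
    simp only [f0a, hy]
  -- LHS part 1 and E1
  have h1 : (∑ i, ∑ j, (-(g⁻¹ * H * g⁻¹)) i j * gdot g (fun k => P k i) (fun k => A k j))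
      = ∑ i, ∑ k, ∑ l, -((P k i * g k l) * ((g⁻¹ * H * g⁻¹ * Aᵀ)) i l) := by
    unfold gdot
    simp only [Finset.sum_mul, Finset.mul_sum]
    rw [show (∑ i, ∑ j, ∑ k, ∑ l, (-(g⁻¹ * H * g⁻¹)) i j * (P k i * g k l * A l j))
        = ∑ i, ∑ k, ∑ l, ∑ j, (P k i * g k l) * ((-(g⁻¹ * H * g⁻¹)) i j * A l j) from by
      rw [← flat4 (fun i j k l => (-(g⁻¹ * H * g⁻¹)) i j * (P k i * g k l * A l j)),
          ← flat4 (fun i k l j => (P k i * g k l) * ((-(g⁻¹ * H * g⁻¹)) i j * A l j))]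
      exact Fintype.sum_equiv
        ⟨fun ⟨i,j,k,l⟩ => ⟨i,k,l,j⟩, fun ⟨i,k,l,j⟩ => ⟨i,j,k,l⟩,
         fun _ => rfl, fun _ => rfl⟩ _ _ (fun ⟨i,j,k,l⟩ => by dsimp; ring)]
    simp only [f0b]
    simp only [Matrix.neg_mul, Matrix.neg_apply, mul_neg]
  have hE1 : (∑ i, ∑ j, g⁻¹ i j * gdot g (fun k => P k i)
        (fun k => (A * (g⁻¹ * H)) k j))
      = ∑ i, ∑ k, ∑ l, (P k i * g k l) * ((g⁻¹ * H * g⁻¹ * Aᵀ)) i l := by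
    unfold gdot
    simp only [Finset.sum_mul, Finset.mul_sum]
    rw [show (∑ i, ∑ j, ∑ k, ∑ l, g⁻¹ i j * (P k i * g k l * (A * (g⁻¹ * H)) l j))
        = ∑ i, ∑ k, ∑ l, ∑ j, (P k i * g k l) * (g⁻¹ i j * (A * (g⁻¹ * H)) l j) from by
      rw [← flat4 (fun i j k l => g⁻¹ i j * (P k i * g k l * (A * (g⁻¹ * H)) l j)),
          ← flat4 (fun i k l j => (P k i * g k l) * (g⁻¹ i j * (A * (g⁻¹ * H)) l j))]
      exact Fintype.sum_equiv
        ⟨fun ⟨i,j,k,l⟩ => ⟨i,k,l,j⟩, fun ⟨i,k,l,j⟩ => ⟨i,j,k,l⟩,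
         fun _ => rfl, fun _ => rfl⟩ _ _ (fun ⟨i,j,k,l⟩ => by dsimp; ring)]
    simp only [f0b, hz]
  -- expand the RHS einner
  have hsplit : einner g P (A * (g⁻¹ * H) - (g⁻¹ * H) * A)
      = (∑ i, ∑ j, g⁻¹ i j * gdot g (fun k => P k i) (fun k => (A * (g⁻¹ * H)) k j))
        - (∑ i, ∑ j, g⁻¹ i j * gdot g (fun k => P k i) (fun k => ((g⁻¹ * H) * A) k j)) := by
    unfold einner gdot
    simp only [Matrix.sub_apply, mul_sub, sub_mul, Finset.sum_sub_distrib]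
  rw [h1, h2, hsplit, hE1, hE2]
  simp only [Finset.sum_neg_distrib]
  ring

/-! ### calculus -/

set_option linter.unnecessarySimpa false

lemma posdef_isUnit {A : Matrix (Fin n) (Fin n) ℝ} (h : A.PosDef) : IsUnit A.det :=
  isUnit_iff_ne_zero.2 h.det_pos.ne'

lemma det_diffAt (M : ℝ → Matrix (Fin n) (Fin n) ℝ) (t₀ : ℝ)
    (h : ∀ i j, DifferentiableAt ℝ (fun u => M u i j) t₀) :
    DifferentiableAt ℝ (fun u => (M u).det) t₀ := by
  have e : (fun u => (M u).det)
      = fun u => ∑ σ : Equiv.Perm (Fin n),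
          ((Equiv.Perm.sign σ : ℤ) : ℝ) * ∏ i, M u (σ i) i := by
    funext u; exact Matrix.det_apply' (M u)
  rw [e]
  exact DifferentiableAt.fun_sum fun σ _ =>
    ((DifferentiableAt.fun_finsetProd (fun i _ => h (σ i) i)).const_mul _)

lemma inv_entry_diffAt (M : ℝ → Matrix (Fin n) (Fin n) ℝ) (t₀ : ℝ)
    (hdet : (M t₀).det ≠ 0)
    (h : ∀ i j, DifferentiableAt ℝ (fun u => M u i j) t₀) (i j : Fin n) :
    DifferentiableAt ℝ (fun u => (M u)⁻¹ i j) t₀ := by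
  have e : (fun u => (M u)⁻¹ i j)
      = fun u => ((M u).det)⁻¹ * ((M u).updateRow j (Pi.single i 1)).det := by
    funext u
    rw [Matrix.inv_def, Ring.inverse_eq_inv', Matrix.smul_apply, Matrix.adjugate_apply]
    rfl
  rw [e]
  refine DifferentiableAt.mul ((det_diffAt M t₀ h).inv hdet) ?_
  refine det_diffAt _ t₀ fun k l => ?_
  by_cases hk : k = j
  · subst hk
    simpa [Matrix.updateRow_apply] using differentiableAt_const (Pi.single i (1:ℝ) l)
  · simpa [Matrix.updateRow_apply, hk] using h k l

lemma inv_hasDerivAt (G : ℝ → Matrix (Fin n) (Fin n) ℝ) (hpd : ∀ t, (G t).PosDef)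
    (t₀ : ℝ) (H : Matrix (Fin n) (Fin n) ℝ)
    (hder : ∀ i j, HasDerivAt (fun u => G u i j) (H i j) t₀) (i j : Fin n) :
    HasDerivAt (fun u => (G u)⁻¹ i j) ((-((G t₀)⁻¹ * H * (G t₀)⁻¹)) i j) t₀ := by
  have hu : ∀ t, IsUnit (G t).det := fun t => posdef_isUnit (hpd t)
  have hdiff : ∀ a b, DifferentiableAt ℝ (fun u => (G u)⁻¹ a b) t₀ := fun a b =>
    inv_entry_diffAt G t₀ (hpd t₀).det_pos.ne' (fun a b => (hder a b).differentiableAt) a b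
  have hK : ∀ a b, HasDerivAt (fun u => (G u)⁻¹ a b)
      (Matrix.of (fun a b => deriv (fun u => (G u)⁻¹ a b) t₀) a b) t₀ := fun a b =>
    (hdiff a b).hasDerivAt
  set K : Matrix (Fin n) (Fin n) ℝ :=
    Matrix.of (fun a b => deriv (fun u => (G u)⁻¹ a b) t₀) with hKdef
  have hzero : ∀ a b, (∑ k, (H a k * (G t₀)⁻¹ k b + G t₀ a k * K k b)) = 0 := by
    intro a b
    have h1 : HasDerivAt (fun u => ∑ k, G u a k * (G u)⁻¹ k b)
        (∑ k, (H a k * (G t₀)⁻¹ k b + G t₀ a k * K k b)) t₀ :=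
      HasDerivAt.fun_sum fun k _ => (hder a k).mul (hK k b)
    have he : (fun u => ∑ k, G u a k * (G u)⁻¹ k b)
        = fun _ => (1 : Matrix (Fin n) (Fin n) ℝ) a b := by
      funext u
      rw [← Matrix.mul_apply, Matrix.mul_nonsing_inv _ (hu u)]
    rw [he] at h1
    exact h1.unique (hasDerivAt_const _ _)
  have hmat : H * (G t₀)⁻¹ + G t₀ * K = 0 := by
    ext a b
    simpa [Matrix.add_apply, Matrix.mul_apply, ← Finset.sum_add_distrib] using hzero a b
  have hKeq : K = -((G t₀)⁻¹ * H * (G t₀)⁻¹) := by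
    have h2 : G t₀ * K = -(H * (G t₀)⁻¹) := eq_neg_of_add_eq_zero_right hmat
    calc K = (G t₀)⁻¹ * (G t₀ * K) :=
          (Matrix.nonsing_inv_mul_cancel_left _ _ (hu t₀)).symm
      _ = (G t₀)⁻¹ * -(H * (G t₀)⁻¹) := by rw [h2]
      _ = -((G t₀)⁻¹ * H * (G t₀)⁻¹) := by rw [Matrix.mul_neg, Matrix.mul_assoc]
  rw [← hKeq]
  exact hK i j

end RFN

open RFN Matrix

theorem stmt17 {n : ℕ} (cs : Fin n → Fin n → Fin n → ℝ) (hcs : IsLieSC cs)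
    (G : ℝ → Matrix (Fin n) (Fin n) ℝ) (hpd : ∀ t, (G t).PosDef) (hsym : ∀ t, (G t).IsSymm)
    (t₀ : ℝ) (H : Matrix (Fin n) (Fin n) ℝ)
    (hder : ∀ i j, HasDerivAt (fun u => G u i j) (H i j) t₀)
    (Rc' : Matrix (Fin n) (Fin n) ℝ)
    (hRc' : ∀ i j, HasDerivAt (fun u => Rc cs (G u) i j) (Rc' i j) t₀)
    (A : Matrix (Fin n) (Fin n) ℝ) :
    einner (G t₀) Rc' A
      = (1/4) * tinner (G t₀) (deltaE cs ((G t₀)⁻¹ * H))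
          (deltaE cs ((G t₀)⁻¹ * A.transpose * (G t₀))) := by
  have hc := hcs.1
  have hu : ∀ t, IsUnit (G t).det := fun t => posdef_isUnit (hpd t)
  have hHsym : H.IsSymm := by
    have he : ∀ i j, HasDerivAt (fun u => G u i j) (H j i) t₀ := by
      intro i j
      have hfe : (fun u => G u i j) = fun u => G u j i :=
        funext fun u => gsym (G u) (hsym u) i j
      rw [hfe]
      exact hder j i
    show Hᵀ = H
    ext i j
    rw [Matrix.transpose_apply]
    exact (hder j i).unique (he j i)
  have hK : ∀ i j, HasDerivAt (fun u => (G u)⁻¹ i j)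
      ((-((G t₀)⁻¹ * H * (G t₀)⁻¹)) i j) t₀ := inv_hasDerivAt G hpd t₀ H hder
  -- derivative of ψ(u) = einner (G u) (Rc cs (G u)) A, two ways
  have hψ : HasDerivAt (fun u => einner (G u) (Rc cs (G u)) A)
      (∑ i, ∑ j, ((-((G t₀)⁻¹ * H * (G t₀)⁻¹)) i j
            * gdot (G t₀) (fun k => Rc cs (G t₀) k i) (fun k => A k j)
          + (G t₀)⁻¹ i j * ∑ k, ∑ l,
              (Rc' k i * G t₀ k l + Rc cs (G t₀) k i * H k l) * A l j)) t₀ :=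
    HasDerivAt.fun_sum fun i _ => HasDerivAt.fun_sum fun j _ =>
      (hK i j).mul (HasDerivAt.fun_sum fun k _ => HasDerivAt.fun_sum fun l _ =>
        ((hRc' k i).mul (hder k l)).mul_const (A l j))
  have hψ2 : (fun u => einner (G u) (Rc cs (G u)) A)
      = fun u => 4⁻¹ * tinner (G u) (theta A cs) cs :=
    funext fun u => L1 cs hc (G u) (hu u) (hsym u) A
  have hT : HasDerivAt (fun u => tinner (G u) (theta A cs) cs)
      (∑ i, ∑ j, ∑ p, ∑ q,
        (((-((G t₀)⁻¹ * H * (G t₀)⁻¹)) i p * (G t₀)⁻¹ j q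
            + (G t₀)⁻¹ i p * (-((G t₀)⁻¹ * H * (G t₀)⁻¹)) j q)
              * gdot (G t₀) (theta A cs i j) (cs p q)
          + (G t₀)⁻¹ i p * (G t₀)⁻¹ j q * ∑ k, ∑ l,
              theta A cs i j k * H k l * cs p q l)) t₀ :=
    HasDerivAt.fun_sum fun i _ => HasDerivAt.fun_sum fun j _ =>
      HasDerivAt.fun_sum fun p _ => HasDerivAt.fun_sum fun q _ =>
        ((hK i p).mul (hK j q)).mul
          (HasDerivAt.fun_sum fun k _ => HasDerivAt.fun_sum fun l _ =>
            ((hder k l).const_mul (theta A cs i j k)).mul_const (cs p q l))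
  have hψ3 : HasDerivAt (fun u => einner (G u) (Rc cs (G u)) A)
      (4⁻¹ * (∑ i, ∑ j, ∑ p, ∑ q,
        (((-((G t₀)⁻¹ * H * (G t₀)⁻¹)) i p * (G t₀)⁻¹ j q
            + (G t₀)⁻¹ i p * (-((G t₀)⁻¹ * H * (G t₀)⁻¹)) j q)
              * gdot (G t₀) (theta A cs i j) (cs p q)
          + (G t₀)⁻¹ i p * (G t₀)⁻¹ j q * ∑ k, ∑ l,
              theta A cs i j k * H k l * cs p q l))) t₀ := by
    rw [hψ2]
    exact hT.const_mul 4⁻¹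
  have hVW := hψ.unique hψ3
  -- split V
  have hVsplit : (∑ i, ∑ j, ((-((G t₀)⁻¹ * H * (G t₀)⁻¹)) i j
            * gdot (G t₀) (fun k => Rc cs (G t₀) k i) (fun k => A k j)
          + (G t₀)⁻¹ i j * ∑ k, ∑ l,
              (Rc' k i * G t₀ k l + Rc cs (G t₀) k i * H k l) * A l j))
      = einner (G t₀) Rc' A
        + ((∑ i, ∑ j, (-((G t₀)⁻¹ * H * (G t₀)⁻¹)) i j
              * gdot (G t₀) (fun k => Rc cs (G t₀) k i) (fun k => A k j))
          + (∑ i, ∑ j, (G t₀)⁻¹ i j * ∑ k, ∑ l,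
              Rc cs (G t₀) k i * H k l * A l j)) := by
    unfold einner gdot
    simp only [add_mul, mul_add, Finset.sum_add_distrib, Finset.mul_sum]
    ring
  have hL2' := L2 cs (G t₀) (hu t₀) (hsym t₀) H hHsym (theta A cs)
  have hL4' := L4 (G t₀) (hu t₀) (hsym t₀) H hHsym (Rc cs (G t₀)) A
  have hcomm := L1 cs hc (G t₀) (hu t₀) (hsym t₀)
    (A * ((G t₀)⁻¹ * H) - ((G t₀)⁻¹ * H) * A)
  have hB : (G t₀)⁻¹ * ((G t₀)⁻¹ * H)ᵀ * G t₀ = (G t₀)⁻¹ * H :=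
    B_selfadj (G t₀) H (hu t₀) (hsym t₀) hHsym
  have hL3' := L3 cs (G t₀) (hu t₀) (hsym t₀) A ((G t₀)⁻¹ * H) hB
  have hq1 : tinner (G t₀) (theta A cs) (theta ((G t₀)⁻¹ * H) cs)
      = tinner (G t₀) (theta ((G t₀)⁻¹ * H) cs) (theta A cs) :=
    tinner_comm (G t₀) (hsym t₀) _ _
  have hq2 : tinner (G t₀)
        (theta (A * ((G t₀)⁻¹ * H) - ((G t₀)⁻¹ * H) * A) cs) cs
      = tinner (G t₀) cs
        (theta (A * ((G t₀)⁻¹ * H) - ((G t₀)⁻¹ * H) * A) cs) :=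
    tinner_comm (G t₀) (hsym t₀) _ _
  have hq3 : tinner (G t₀) (theta ((G t₀)⁻¹ * Aᵀ * G t₀) cs) (theta ((G t₀)⁻¹ * H) cs)
      = tinner (G t₀) (theta ((G t₀)⁻¹ * H) cs) (theta ((G t₀)⁻¹ * Aᵀ * G t₀) cs) :=
    tinner_comm (G t₀) (hsym t₀) _ _
  show einner (G t₀) Rc' A
      = 1/4 * tinner (G t₀) (theta ((G t₀)⁻¹ * H) cs) (theta ((G t₀)⁻¹ * Aᵀ * G t₀) cs)
  linarith [hVW, hVsplit, hL2', hL4', hcomm, hL3', hq1, hq2, hq3]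
end

section
/- Let G be a 2×2 real symmetric positive-definite matrix-valued function on an open interval U ⊆ ℝ containing 0, with G(0) = I, satisfying: det G(s) = 1, G'' = G' G⁻¹ G', and (1/2)tr(G⁻¹G' G⁻¹G') constant on U. Then G(s) = exp(sX) for a symmetric traceless 2×2 matrix X, and the constant equals (1/2)tr X². -/
open Matrix

/-- derivative of each entry of `exp ℝ (u • X)`. -/
lemma expEntryDeriv (X : Matrix (Fin 2) (Fin 2) ℝ) (t : ℝ) (i j : Fin 2) :
    HasDerivAt (fun u : ℝ => NormedSpace.exp (u • X) i j)
      ((NormedSpace.exp (t • X) * X) i j) t := by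
  letI : SeminormedRing (Matrix (Fin 2) (Fin 2) ℝ) := Matrix.linftyOpSemiNormedRing
  letI : NormedRing (Matrix (Fin 2) (Fin 2) ℝ) := Matrix.linftyOpNormedRing
  letI : NormedAlgebra ℝ (Matrix (Fin 2) (Fin 2) ℝ) := Matrix.linftyOpNormedAlgebra
  have h : HasDerivAt (fun u : ℝ => NormedSpace.exp (u • X))
      (NormedSpace.exp (t • X) * X) t := hasDerivAt_exp_smul_const X t
  let L1 : Matrix (Fin 2) (Fin 2) ℝ →ₗ[ℝ] (Fin 2 → ℝ) := LinearMap.proj i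
  let L2 : (Fin 2 → ℝ) →ₗ[ℝ] ℝ := LinearMap.proj j
  let L : Matrix (Fin 2) (Fin 2) ℝ →ₗ[ℝ] ℝ := L2.comp L1
  have hL := (LinearMap.toContinuousLinearMap L).hasFDerivAt.comp_hasDerivAt t h
  exact hL

/-- entrywise product rule for 2×2 matrix products. -/
lemma hasDerivAt_matMul {A B : ℝ → Matrix (Fin 2) (Fin 2) ℝ}
    {A' B' : Matrix (Fin 2) (Fin 2) ℝ} {s : ℝ}
    (hA : ∀ i j, HasDerivAt (fun u => A u i j) (A' i j) s)
    (hB : ∀ i j, HasDerivAt (fun u => B u i j) (B' i j) s) (i j : Fin 2) :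
    HasDerivAt (fun u => (A u * B u) i j) ((A' * B s + A s * B') i j) s := by
  have h := (((hA i 0).mul (hB 0 j)).add ((hA i 1).mul (hB 1 j)))
  have heq : (fun u => (A u * B u) i j)
      = fun u => A u i 0 * B u 0 j + A u i 1 * B u 1 j := by
    funext u; simp [Matrix.mul_apply, Fin.sum_univ_two]
  rw [heq]
  refine h.congr_deriv ?_
  simp [Matrix.mul_apply, Matrix.add_apply, Fin.sum_univ_two]
  ring

/-- a real function with derivative zero on an open interval is constant there. -/
lemma const_of_derivZero {f : ℝ → ℝ} {a b : ℝ}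
    (h : ∀ x ∈ Set.Ioo a b, HasDerivAt f 0 x) {x y : ℝ}
    (hx : x ∈ Set.Ioo a b) (hy : y ∈ Set.Ioo a b) : f x = f y := by
  apply (convex_Ioo a b).is_const_of_fderivWithin_eq_zero
    (fun z hz => ((h z hz).differentiableAt).differentiableWithinAt) _ hx hy
  intro z hz
  rw [fderivWithin_of_isOpen isOpen_Ioo hz]
  exact ((h z hz).hasFDerivAt.fderiv).trans (by ext v : 1; simp)

theorem stmt19 (a b : ℝ) (ha : a < 0) (hb : 0 < b)
    (G G' G'' : ℝ → Matrix (Fin 2) (Fin 2) ℝ) (k : ℝ)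
    (hd1 : ∀ s ∈ Set.Ioo a b, ∀ i j : Fin 2, HasDerivAt (fun u => G u i j) (G' s i j) s)
    (hd2 : ∀ s ∈ Set.Ioo a b, ∀ i j : Fin 2, HasDerivAt (fun u => G' u i j) (G'' s i j) s)
    (hpd : ∀ s ∈ Set.Ioo a b, (G s).PosDef)
    (h0 : G 0 = 1)
    (hdet : ∀ s ∈ Set.Ioo a b, (G s).det = 1)
    (hode : ∀ s ∈ Set.Ioo a b, G'' s = G' s * (G s)⁻¹ * G' s)
    (hk : ∀ s ∈ Set.Ioo a b,
      (1/2) * Matrix.trace ((G s)⁻¹ * G' s * (G s)⁻¹ * G' s) = k) :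
    ∃ X : Matrix (Fin 2) (Fin 2) ℝ, X.IsSymm ∧ X.trace = 0 ∧
      (∀ s ∈ Set.Ioo a b, G s = NormedSpace.exp (s • X)) ∧
      k = (1/2) * Matrix.trace (X * X) := by
  have h0mem : (0 : ℝ) ∈ Set.Ioo a b := ⟨ha, hb⟩
  set X : Matrix (Fin 2) (Fin 2) ℝ := G' 0 with hX
  -- inverse is adjugate
  have hinv : ∀ s ∈ Set.Ioo a b, (G s)⁻¹ = (G s).adjugate := by
    intro s hs
    rw [Matrix.inv_def, hdet s hs]
    simp
  -- adjugate entries derivative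
  have hadj : ∀ s ∈ Set.Ioo a b, ∀ i j : Fin 2,
      HasDerivAt (fun u => (G u).adjugate i j) ((G' s).adjugate i j) s := by
    intro s hs i j
    fin_cases i <;> fin_cases j <;>
      simp only [Matrix.adjugate_fin_two, Matrix.cons_val', Matrix.cons_val_zero,
        Matrix.cons_val_one, Matrix.head_cons, Matrix.empty_val',
        Matrix.cons_val_fin_one, Matrix.head_fin_const] <;>
    first
      | exact hd1 s hs 1 1
      | exact (hd1 s hs 0 1).neg
      | exact (hd1 s hs 1 0).neg
      | exact hd1 s hs 0 0
  -- adj(G') * G + adj(G) * G' = 0 on the interval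
  have h1 : ∀ s ∈ Set.Ioo a b, (G' s).adjugate * G s + (G s).adjugate * G' s = 0 := by
    intro s hs
    ext i j
    have hder := hasDerivAt_matMul (hadj s hs) (hd1 s hs) i j
    have hconst : HasDerivAt (fun u => ((G u).adjugate * G u) i j) 0 s := by
      have hev : (fun u => ((G u).adjugate * G u) i j)
          =ᶠ[nhds s] fun _ => (1 : Matrix (Fin 2) (Fin 2) ℝ) i j := by
        filter_upwards [isOpen_Ioo.mem_nhds hs] with u hu
        rw [Matrix.adjugate_mul, hdet u hu, one_smul]
      exact (hasDerivAt_const s _).congr_of_eventuallyEq hev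
    have := hder.unique hconst
    simpa using this
  -- H = adj(G) * G' is constant, equal to X
  have hH : ∀ s ∈ Set.Ioo a b, (G s).adjugate * G' s = X := by
    have hHd : ∀ s ∈ Set.Ioo a b, ∀ i j : Fin 2,
        HasDerivAt (fun u => ((G u).adjugate * G' u) i j) 0 s := by
      intro s hs i j
      have hder := hasDerivAt_matMul (hadj s hs) (hd2 s hs) i j
      have hz : ((G' s).adjugate * G' s + (G s).adjugate * G'' s) = 0 := by
        have h2 : (G' s).adjugate * G s = -((G s).adjugate * G' s) :=
          eq_neg_of_add_eq_zero_left (h1 s hs)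
        have e1 : (G' s).adjugate * G s * (G s).adjugate
            = -((G s).adjugate * G' s * (G s).adjugate) := by
          rw [h2, neg_mul]
        have e2 : (G' s).adjugate * G s * (G s).adjugate = (G' s).adjugate := by
          rw [mul_assoc, Matrix.mul_adjugate, hdet s hs, one_smul, mul_one]
        rw [hode s hs, hinv s hs, ← e2, e1]
        noncomm_ring
      rw [hz] at hder
      simpa using hder
    intro s hs
    ext i j
    have := const_of_derivZero (f := fun u => ((G u).adjugate * G' u) i j)
      (fun x hx => hHd x hx i j) hs h0mem
    simpa [h0, hX] using this
  -- G' = G * X on the interval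
  have hG' : ∀ s ∈ Set.Ioo a b, G' s = G s * X := by
    intro s hs
    have := congrArg (fun M => G s * M) (hH s hs)
    rw [← mul_assoc, Matrix.mul_adjugate, hdet s hs, one_smul, one_mul] at this
    exact this
  -- symmetry of X
  have hsymm : X.IsSymm := by
    ext i j
    have hd_ij := hd1 0 h0mem i j
    have hd_ji : HasDerivAt (fun u => G u i j) (G' 0 j i) 0 := by
      refine (hd1 0 h0mem j i).congr_of_eventuallyEq ?_
      filter_upwards [isOpen_Ioo.mem_nhds h0mem] with u hu
      have h := (hpd u hu).isHermitian.apply j i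
      simpa using h
    have := hd_ij.unique hd_ji
    simpa [Matrix.transpose_apply, hX] using this.symm
  -- trace of X is zero
  have htr : X.trace = 0 := by
    have hdetd : HasDerivAt (fun u => (G u).det) (X 0 0 + X 1 1) 0 := by
      have h := ((hd1 0 h0mem 0 0).mul (hd1 0 h0mem 1 1)).sub
        ((hd1 0 h0mem 0 1).mul (hd1 0 h0mem 1 0))
      have heq : (fun u => (G u).det) = fun u => G u 0 0 * G u 1 1 - G u 0 1 * G u 1 0 := by
        funext u; rw [Matrix.det_fin_two]
      rw [heq]
      refine h.congr_deriv ?_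
      have e00 : G 0 0 0 = 1 := by rw [h0]; rfl
      have e11 : G 0 1 1 = 1 := by rw [h0]; rfl
      have e01 : G 0 0 1 = 0 := by rw [h0]; rfl
      have e10 : G 0 1 0 = 0 := by rw [h0]; rfl
      rw [e00, e11, e01, e10]; ring
    have hconst : HasDerivAt (fun u => (G u).det) 0 0 := by
      refine (hasDerivAt_const 0 (1:ℝ)).congr_of_eventuallyEq ?_
      filter_upwards [isOpen_Ioo.mem_nhds h0mem] with u hu
      exact hdet u hu
    have := hdetd.unique hconst
    rw [Matrix.trace_fin_two]
    exact this
  -- G s = exp (s • X)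
  have hexp : ∀ s ∈ Set.Ioo a b, G s = NormedSpace.exp (s • X) := by
    have hWd : ∀ s ∈ Set.Ioo a b, ∀ i j : Fin 2,
        HasDerivAt (fun u => (G u * NormedSpace.exp (u • (-X))) i j) 0 s := by
      intro s hs i j
      have hE : ∀ i j : Fin 2, HasDerivAt (fun u => NormedSpace.exp (u • (-X)) i j)
          ((NormedSpace.exp (s • (-X)) * (-X)) i j) s := fun i j => expEntryDeriv (-X) s i j
      have hder := hasDerivAt_matMul (hd1 s hs) hE i j
      have hz : (G' s * NormedSpace.exp (s • (-X))
          + G s * (NormedSpace.exp (s • (-X)) * (-X))) = 0 := by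
        have hcomm : X * NormedSpace.exp (s • (-X))
            = NormedSpace.exp (s • (-X)) * X := by
          letI : SeminormedRing (Matrix (Fin 2) (Fin 2) ℝ) := Matrix.linftyOpSemiNormedRing
          letI : NormedRing (Matrix (Fin 2) (Fin 2) ℝ) := Matrix.linftyOpNormedRing
          letI : NormedAlgebra ℝ (Matrix (Fin 2) (Fin 2) ℝ) := Matrix.linftyOpNormedAlgebra
          have : Commute X (s • (-X)) := by
            apply Commute.smul_right
            exact (Commute.refl X).neg_right
          exact this.exp_right
        rw [hG' s hs]
        rw [mul_assoc (G s) X (NormedSpace.exp (s • (-X))), hcomm]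
        noncomm_ring
      rw [hz] at hder
      simpa using hder
    intro s hs
    have hW : G s * NormedSpace.exp (s • (-X)) = 1 := by
      ext i j
      have h2 := const_of_derivZero
        (f := fun u => (G u * NormedSpace.exp (u • (-X))) i j)
        (fun x hx => hWd x hx i j) hs h0mem
      simp only [h0, zero_smul, NormedSpace.exp_zero, Matrix.one_mul] at h2
      exact h2
    have hinvexp : s • (-X) = -(s • X) := by rw [smul_neg]
    rw [hinvexp, Matrix.exp_neg] at hW
    have hunit : IsUnit (NormedSpace.exp (s • X)).det :=
      (Matrix.isUnit_iff_isUnit_det _).mp (Matrix.isUnit_exp _)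
    calc G s = G s * ((NormedSpace.exp (s • X))⁻¹ * NormedSpace.exp (s • X)) := by
          rw [Matrix.nonsing_inv_mul _ hunit, mul_one]
      _ = NormedSpace.exp (s • X) := by rw [← mul_assoc, hW, one_mul]
  -- compute k
  have hkX : k = (1/2) * Matrix.trace (X * X) := by
    have := hk 0 h0mem
    rw [h0] at this
    simp only [inv_one, one_mul, mul_one] at this
    rw [← this, hX]
  exact ⟨X, hsymm, htr, hexp, hkX⟩
end
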